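/- Let a, b, τ > 0 and s ∈ ℝ, and define the density of λ on (0,∞) by p_λ(t) = 2t · C(a,b,τ,s)^{−1} t^{2(b−1)} (1+t²)^{−(a+b)} exp{−s/(1+t²)} {τ² + (1−τ²)/(1+t²)}^{−1} (the density of λ when λ² = 1/κ − 1 and κ has the hypergeometric-beta density π_{a,b,τ,s}). Then p_λ has polynomial upper tail of order t^{−(2a+1)}: lim_{t→∞} t^{2a+1} p_λ(t) = 2 / (τ² C(a,b,τ,s)). -/

import Mathlib

open MeasureTheory Set Filter

/-- The unnormalized hypergeometric-beta kernel
`κ^{a−1} (1−κ)^{b−1} {1/τ² + (1 − 1/τ²)κ}^{−1} e^{−sκ}`. -/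
noncomputable def hbKer (a b τ s κ : ℝ) : ℝ :=
  κ ^ (a - 1) * (1 - κ) ^ (b - 1) * (1 / τ ^ 2 + (1 - 1 / τ ^ 2) * κ)⁻¹ *
    Real.exp (-(s * κ))

/-- The normalizing constant `C(a,b,τ,s)`. -/
noncomputable def hbC (a b τ s : ℝ) : ℝ :=
  ∫ κ in Set.Ioo (0 : ℝ) 1, hbKer a b τ s κ

/-- The hypergeometric-beta density `π_{a,b,τ,s}` on `(0,1)`. -/
noncomputable def hbPdf (a b τ s κ : ℝ) : ℝ :=
  (hbC a b τ s)⁻¹ * hbKer a b τ s κ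

/-- The density of `λ` when `λ² = 1/κ − 1` and `κ ~ HB(a,b,τ,s)`. -/
noncomputable def lamPdf (a b τ s t : ℝ) : ℝ :=
  2 * t * (hbC a b τ s)⁻¹ * t ^ (2 * (b - 1)) * (1 + t ^ 2) ^ (-(a + b)) *
    Real.exp (-s / (1 + t ^ 2)) * (τ ^ 2 + (1 - τ ^ 2) / (1 + t ^ 2))⁻¹

theorem lamPdf_polynomial_tail (a b τ s : ℝ) (ha : 0 < a) (hb : 0 < b) (hτ : 0 < τ) :
    Tendsto (fun t : ℝ => t ^ (2 * a + 1) * lamPdf a b τ s t)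
      atTop (nhds (2 / (τ ^ 2 * hbC a b τ s))) := by
  set C := hbC a b τ s with hC
  -- auxiliary limits
  have h1 : Tendsto (fun t : ℝ => 1 + t ^ 2) atTop atTop := by
    apply tendsto_atTop_add_const_left
    exact tendsto_pow_atTop (by norm_num) |>.comp tendsto_id |>.congr (fun t => rfl)
  have hinv : Tendsto (fun t : ℝ => (1 + t ^ 2)⁻¹) atTop (nhds 0) :=
    tendsto_inv_atTop_zero.comp h1
  have hbase : Tendsto (fun t : ℝ => t ^ 2 / (1 + t ^ 2)) atTop (nhds 1) := by
    have : Tendsto (fun t : ℝ => 1 - (1 + t ^ 2)⁻¹) atTop (nhds 1) := by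
      simpa using (tendsto_const_nhds (x := (1:ℝ)) (f := atTop)).sub hinv
    refine this.congr' ?_
    filter_upwards [eventually_gt_atTop (0:ℝ)] with t ht
    have h0 : (1 + t ^ 2) ≠ 0 := by positivity
    field_simp
    ring
  have hrpow : Tendsto (fun t : ℝ => (t ^ 2 / (1 + t ^ 2)) ^ (a + b)) atTop
      (nhds ((1:ℝ) ^ (a + b))) :=
    hbase.rpow_const (Or.inl one_ne_zero)
  have hexp : Tendsto (fun t : ℝ => Real.exp (-s / (1 + t ^ 2))) atTop (nhds 1) := by
    have h2 : Tendsto (fun t : ℝ => -s / (1 + t ^ 2)) atTop (nhds 0) := by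
      simpa [div_eq_mul_inv] using hinv.const_mul (-s)
    have h3 := (Real.continuous_exp.tendsto 0).comp h2
    rw [Real.exp_zero] at h3
    exact h3
  have hI : Tendsto (fun t : ℝ => (τ ^ 2 + (1 - τ ^ 2) / (1 + t ^ 2))⁻¹) atTop
      (nhds ((τ ^ 2)⁻¹)) := by
    have h2 : Tendsto (fun t : ℝ => τ ^ 2 + (1 - τ ^ 2) / (1 + t ^ 2)) atTop
        (nhds (τ ^ 2)) := by
      have := hinv.const_mul (1 - τ ^ 2)
      simpa [div_eq_mul_inv] using (tendsto_const_nhds (x := τ ^ 2) (f := atTop)).add this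
    exact h2.inv₀ (by positivity)
  have hg : Tendsto (fun t : ℝ => 2 * C⁻¹ * (t ^ 2 / (1 + t ^ 2)) ^ (a + b) *
      Real.exp (-s / (1 + t ^ 2)) * (τ ^ 2 + (1 - τ ^ 2) / (1 + t ^ 2))⁻¹) atTop
      (nhds (2 / (τ ^ 2 * C))) := by
    have := (((tendsto_const_nhds (x := 2 * C⁻¹) (f := atTop)).mul hrpow).mul hexp).mul hI
    convert this using 2
    rw [Real.one_rpow]
    field_simp
  refine hg.congr' ?_
  filter_upwards [eventually_gt_atTop (0:ℝ)] with t ht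
  have h1t : (0:ℝ) < 1 + t ^ 2 := by positivity
  have key : t ^ (2 * a + 1) * (2 * t) * t ^ (2 * (b - 1)) * (1 + t ^ 2) ^ (-(a + b))
      = 2 * (t ^ 2 / (1 + t ^ 2)) ^ (a + b) := by
    have e1 : t ^ (2 * a + 1) * (2 * t) * t ^ (2 * (b - 1))
        = 2 * t ^ (2 * (a + b)) := by
      calc t ^ (2 * a + 1) * (2 * t) * t ^ (2 * (b - 1))
          = 2 * (t ^ (2 * a + 1) * t ^ (1:ℝ) * t ^ (2 * (b - 1))) := by
            rw [Real.rpow_one]; ring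
        _ = 2 * t ^ ((2 * a + 1) + 1 + 2 * (b - 1)) := by
            rw [← Real.rpow_add ht, ← Real.rpow_add ht]
        _ = 2 * t ^ (2 * (a + b)) := by ring_nf
    have e2 : t ^ (2 * (a + b)) = (t ^ 2) ^ (a + b) := by
      rw [Real.rpow_mul ht.le, Real.rpow_two, sq]
    have e3 : (t ^ 2 / (1 + t ^ 2)) ^ (a + b)
        = (t ^ 2) ^ (a + b) * (1 + t ^ 2) ^ (-(a + b)) := by
      rw [Real.div_rpow (by positivity) h1t.le, Real.rpow_neg h1t.le, div_eq_mul_inv]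
    rw [e1, e2, e3]; ring
  simp only [lamPdf, ← hC]
  symm
  calc t ^ (2 * a + 1) * (2 * t * C⁻¹ * t ^ (2 * (b - 1)) * (1 + t ^ 2) ^ (-(a + b)) *
        Real.exp (-s / (1 + t ^ 2)) * (τ ^ 2 + (1 - τ ^ 2) / (1 + t ^ 2))⁻¹)
      = (t ^ (2 * a + 1) * (2 * t) * t ^ (2 * (b - 1)) * (1 + t ^ 2) ^ (-(a + b))) *
        C⁻¹ * Real.exp (-s / (1 + t ^ 2)) * (τ ^ 2 + (1 - τ ^ 2) / (1 + t ^ 2))⁻¹ := by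
        ring
    _ = 2 * C⁻¹ * (t ^ 2 / (1 + t ^ 2)) ^ (a + b) * Real.exp (-s / (1 + t ^ 2)) *
        (τ ^ 2 + (1 - τ ^ 2) / (1 + t ^ 2))⁻¹ := by rw [key]; ring
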